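/- Let T_{2A}(m,n) = [[0,n,0,-m],[0,0,1,0],[0,0,0,1],[-h₁,0,-h₂,0]], T_{2B} = [[0,0,0,0],[-h₂,0,-h₁,0],[0,h₂,0,-h₁],[1,0,0,0]], T_{2C} = [[0,-h₁,0,h₂],[0,0,0,0],[0,0,0,0],[0,0,0,0]]. Then det(T_{2A}(m,n)) = h₁·n, and if h₁n ≠ 0 then T_{2A}(0,1) - T_{2C}·T_{2A}(m,n)⁻¹·T_{2B} = T_{2A}(m',n') with m' = -h₁h₂ + h₁²m/n and n' = 1 - h₂² + h₁h₂m/n. -/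

import Mathlib

open Matrix

noncomputable def T2A (h₁ h₂ m n : ℝ) : Matrix (Fin 4) (Fin 4) ℝ :=
  !![0,n,0,-m; 0,0,1,0; 0,0,0,1; -h₁,0,-h₂,0]

noncomputable def T2B (h₁ h₂ : ℝ) : Matrix (Fin 4) (Fin 4) ℝ :=
  !![0,0,0,0; -h₂,0,-h₁,0; 0,h₂,0,-h₁; 1,0,0,0]

noncomputable def T2C (h₁ h₂ : ℝ) : Matrix (Fin 4) (Fin 4) ℝ :=
  !![0,-h₁,0,h₂; 0,0,0,0; 0,0,0,0; 0,0,0,0]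

set_option maxHeartbeats 2000000 in
/-- `det T_{2A}(m,n) = h₁ n`, and for `h₁ n ≠ 0`,
`T_{2A}(0,1) - T_{2C} T_{2A}(m,n)⁻¹ T_{2B} = T_{2A}(m',n')` with
`m' = -h₁h₂ + h₁²m/n`, `n' = 1 - h₂² + h₁h₂m/n`. -/
theorem T2A_det_and_schur_step (h₁ h₂ m n : ℝ) :
    (T2A h₁ h₂ m n).det = h₁ * n ∧
    (h₁ * n ≠ 0 →
      T2A h₁ h₂ 0 1 - T2C h₁ h₂ * (T2A h₁ h₂ m n)⁻¹ * T2B h₁ h₂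
        = T2A h₁ h₂ (-h₁*h₂ + h₁^2 * m / n) (1 - h₂^2 + h₁*h₂ * m / n)) := by
  constructor
  · simp [T2A, Matrix.det_succ_row_zero, Fin.sum_univ_succ, Matrix.det_fin_three, Fin.succAbove]; ring
  · intro hne
    have hh : h₁ ≠ 0 := fun h => hne (by simp [h])
    have hn : n ≠ 0 := fun h => hne (by simp [h])
    have hinv : (T2A h₁ h₂ m n)⁻¹ =
        !![0,-h₂/h₁,0,-1/h₁; 1/n,0,m/n,0; 0,1,0,0; 0,0,1,0] := by
      apply Matrix.inv_eq_right_inv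
      ext i j
      fin_cases i <;> fin_cases j <;>
        simp [T2A, Matrix.mul_apply, Fin.sum_univ_four, Matrix.vecHead, Matrix.vecTail] <;>
        field_simp <;> ring
    rw [hinv]
    ext i j
    fin_cases i <;> fin_cases j <;>
      simp [T2A, T2B, T2C, Matrix.mul_apply, Fin.sum_univ_four, Matrix.vecHead,
        Matrix.vecTail] <;> field_simp <;> ring
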